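/- arXiv:1304.0625 — 2 statements merged into one kernel-verified Lean document; each statement's English description precedes it below -/
import Mathlib

section
/- Let n≥2, 0<α≤1 and q = n/(n−α). Suppose Ω ∈ Din^{n/(n−α)}_α(S^{n-1}). Then there exists a constant C>0, independent of f, such that ‖T_{Ω,α}(f)‖_{WL^{n/(n−α)}} ≤ C‖f‖_{L^1} for every f ∈ L^1(ℝ^n). -/
open MeasureTheory Metric Set Filter SchwartzMap
open scoped ENNReal NNReal Topology

noncomputable section


/-- Euclidean space `ℝ^n`. -/
abbrev Euc (n : ℕ) := EuclideanSpace ℝ (Fin n)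

/-- The unit sphere `S^{n-1}` in `ℝ^n`. -/
def unitSphere (n : ℕ) : Set (Euc n) := Metric.sphere (0 : Euc n) 1

/-- The surface measure `dσ` on the unit sphere: `(n-1)`-dimensional Hausdorff measure. -/
def sphereMeasure (n : ℕ) : Measure (Euc n) := μH[(n : ℝ) - 1]

/-- Condition (1): `Ω(x, λz) = Ω(x, z)` for all `λ > 0`. -/
def Homogeneous (n : ℕ) (Ω : Euc n → Euc n → ℝ) : Prop :=
  ∀ x z : Euc n, ∀ c : ℝ, 0 < c → Ω x (c • z) = Ω x z

/-- Condition (2): `sup_x (∫_{S^{n-1}} |Ω(x,z')|^r dσ(z'))^{1/r} < ∞`. -/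
def SphereLrBound (n : ℕ) (r : ℝ) (Ω : Euc n → Euc n → ℝ) : Prop :=
  (⨆ x : Euc n,
    (∫⁻ z in unitSphere n, ENNReal.ofReal (|Ω x z| ^ r) ∂sphereMeasure n) ^ (1 / r)) < ∞

/-- Condition (2'): `sup_{x, ρ ≥ 0} (∫_{S^{n-1}} |Ω(x+ρz',z')|^r dσ(z'))^{1/r} < ∞`. -/
def SphereLrBound' (n : ℕ) (r : ℝ) (Ω : Euc n → Euc n → ℝ) : Prop :=
  (⨆ x : Euc n, ⨆ ρ : ℝ≥0,
    (∫⁻ z in unitSphere n,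
      ENNReal.ofReal (|Ω (x + (ρ : ℝ) • z) z| ^ r) ∂sphereMeasure n) ^ (1 / r)) < ∞

/-- Condition (3): `∫_{S^{n-1}} Ω(x,z') dσ(z') = 0` for every `x`. -/
def SphereCancel (n : ℕ) (Ω : Euc n → Euc n → ℝ) : Prop :=
  ∀ x : Euc n, ∫ z in unitSphere n, Ω x z ∂sphereMeasure n = 0

/-- The integral modulus of continuity `ω_r(δ)` of order `r` of `Ω`. -/
def omegaMod (n : ℕ) (r : ℝ) (Ω : Euc n → Euc n → ℝ) (δ : ℝ) : ℝ≥0∞ :=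
  ⨆ x : Euc n, ⨆ ρ : ℝ≥0,
    (∫⁻ z in unitSphere n,
      (⨆ y : {y : Euc n // y ∈ unitSphere n ∧ ‖y - z‖ ≤ δ},
        ENNReal.ofReal
          (|Ω (x + (ρ : ℝ) • z) (y : Euc n) - Ω (x + (ρ : ℝ) • z) z| ^ r))
      ∂sphereMeasure n) ^ (1 / r)

/-- The `L^{r,α}`-Dini condition: (1), (2'), (3) together with
`∫_0^1 ω_r(δ)/δ^{1+α} dδ < ∞`.  For `α = 0` this is the `L^r`-Dini condition. -/
def DiniCondition (n : ℕ) (r α : ℝ) (Ω : Euc n → Euc n → ℝ) : Prop :=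
  Homogeneous n Ω ∧ SphereLrBound' n r Ω ∧ SphereCancel n Ω ∧
    (∫⁻ δ in Set.Ioo (0 : ℝ) 1, omegaMod n r Ω δ / ENNReal.ofReal (δ ^ (1 + α))) < ∞

/-- The class `Din^r_β(S^{n-1})`: all `Ω` satisfying the `L^{r,γ}`-Dini condition for every
`0 < γ < β`. -/
def DinClass (n : ℕ) (r β : ℝ) (Ω : Euc n → Euc n → ℝ) : Prop :=
  ∀ γ : ℝ, 0 < γ → γ < β → DiniCondition n r γ Ω

/-- The kernel `K_α(x,z) = Ω(x, z/|z|) / |z|^{n-α}`; `α = 0` gives `K(x,z)`. -/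
def Kker (n : ℕ) (α : ℝ) (Ω : Euc n → Euc n → ℝ) (x z : Euc n) : ℝ :=
  Ω x (‖z‖⁻¹ • z) / ‖z‖ ^ ((n : ℝ) - α)

/-- The singular integral operator with variable kernel,
`T_Ω f(x) = p.v. ∫ K(x, x-y) f(y) dy`, as a principal value. -/
def TOmega (n : ℕ) (Ω : Euc n → Euc n → ℝ) (f : Euc n → ℝ) (x : Euc n) : ℝ :=
  limUnder (𝓝[>] (0 : ℝ))
    (fun ε => ∫ y in {y : Euc n | ε ≤ ‖x - y‖}, Kker n 0 Ω x (x - y) * f y)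

/-- The fractional integral operator with variable kernel,
`T_{Ω,α} f(x) = ∫ K_α(x, x-y) f(y) dy`. -/
def TOmegaAlpha (n : ℕ) (α : ℝ) (Ω : Euc n → Euc n → ℝ) (f : Euc n → ℝ) (x : Euc n) : ℝ :=
  ∫ y, Kker n α Ω x (x - y) * f y

/-- The weak `L^p` quasinorm `‖f‖_{WL^p} = sup_{λ>0} λ |{|f| > λ}|^{1/p}`. -/
def wnorm (n : ℕ) (p : ℝ) (f : Euc n → ℝ) : ℝ≥0∞ :=
  ⨆ c : ℝ≥0, (c : ℝ≥0∞) * (volume {x : Euc n | (c : ℝ) < |f x|}) ^ (1 / p)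

/-- The weak `L^p` quasinorm for an `ℝ≥0∞`-valued function. -/
def wnormE (n : ℕ) (p : ℝ) (g : Euc n → ℝ≥0∞) : ℝ≥0∞ :=
  ⨆ c : ℝ≥0, (c : ℝ≥0∞) * (volume {x : Euc n | (c : ℝ≥0∞) < g x}) ^ (1 / p)

/-- The test class `𝒜_N` of Schwartz functions `φ` with
`(1+|x|)^{N+n+1} |D^γ φ(x)| ≤ 1` for all `x` and all multi-indices `|γ| ≤ N+1`
(mixed partial derivatives realised via the iterated Fréchet derivative applied to
coordinate basis vectors). -/
def calA (n N : ℕ) : Set (SchwartzMap (Euc n) ℝ) :=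
  {φ | ∀ x : Euc n, ∀ k : ℕ, k ≤ N + 1 → ∀ m : Fin k → Fin n,
    (1 + ‖x‖) ^ (N + n + 1) *
      |iteratedFDeriv ℝ k (φ : Euc n → ℝ) x (fun i => EuclideanSpace.single (m i) (1 : ℝ))|
      ≤ 1}

/-- The integer `N = [n(1/p-1)]`. -/
def Npar (n : ℕ) (p : ℝ) : ℕ := ⌊(n : ℝ) * (1 / p - 1)⌋₊

/-- The grand maximal function of a locally integrable function `f`:
`Gf(x) = sup_{φ ∈ 𝒜_N} sup_{t>0, |y-x|<t} |(φ_t * f)(y)|`. -/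
def grandMaximalF (n : ℕ) (p : ℝ) (f : Euc n → ℝ) (x : Euc n) : ℝ≥0∞ :=
  ⨆ φ ∈ calA n (Npar n p), ⨆ t : {t : ℝ // 0 < t}, ⨆ y : {y : Euc n // dist y x < t},
    ENNReal.ofReal
      |∫ z, ((t : ℝ) ^ (n : ℕ))⁻¹ * φ ((t : ℝ)⁻¹ • ((y : Euc n) - z)) * f z|

/-- The weak Hardy space quasinorm of a function, `‖f‖_{WH^p} = ‖Gf‖_{WL^p}`. -/
def whnormF (n : ℕ) (p : ℝ) (f : Euc n → ℝ) : ℝ≥0∞ :=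
  wnormE n p (grandMaximalF n p f)

/-- A cube `Q(c, r)` in `ℝ^n` centered at `c` with side length `r`. -/
def cube (n : ℕ) (c : Euc n) (r : ℝ) : Set (Euc n) :=
  {y : Euc n | ∀ j : Fin n, |y j - c j| ≤ r / 2}


lemma abs_apply_le_norm {n : ℕ} (z : Euc n) (j : Fin n) : |z j| ≤ ‖z‖ := by
  rw [EuclideanSpace.norm_eq]
  have h1 : |z j| = Real.sqrt (|z j| ^ 2) := (Real.sqrt_sq (abs_nonneg _)).symm
  rw [h1]
  apply Real.sqrt_le_sqrt
  rw [sq_abs]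
  have h2 : z j ^ 2 = ‖z j‖ ^ 2 := by rw [Real.norm_eq_abs, sq_abs]
  rw [h2]
  exact Finset.single_le_sum (fun i _ => sq_nonneg ‖z i‖) (Finset.mem_univ j)


lemma mem_unitSphere_iff {n : ℕ} {z : Euc n} : z ∈ unitSphere n ↔ ‖z‖ = 1 := by
  rw [unitSphere, mem_sphere_iff_norm, sub_zero]


lemma cap_pos {n : ℕ} (hn : 2 ≤ n) {δ : ℝ} (hδ0 : 0 < δ) (hδ1 : δ ≤ 1) :
    ∃ m₀ : ℝ≥0∞, 0 < m₀ ∧ ∀ w ∈ unitSphere n,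
      m₀ ≤ sphereMeasure n (unitSphere n ∩ Metric.closedBall w δ) := by
  obtain ⟨m, rfl⟩ : ∃ m, n = m + 1 := ⟨n - 1, by omega⟩
  set e : Euc (m+1) := EuclideanSpace.single (Fin.last m) (1:ℝ) with he_def
  have he_norm : ‖e‖ = 1 := by
    rw [he_def, EuclideanSpace.norm_single, norm_one]
  refine ⟨sphereMeasure (m+1) (unitSphere (m+1) ∩ Metric.closedBall e δ), ?_, ?_⟩
  · -- positivity of the cap at `e` via projection onto first m coordinates
    have hm1 : (0:ℝ) < (m:ℝ) + 1 := by positivity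
    set a : ℝ := δ / (2 * Real.sqrt ((m:ℝ)+1)) with ha_def
    have hsq : (0:ℝ) < Real.sqrt ((m:ℝ)+1) := Real.sqrt_pos.mpr hm1
    have ha : 0 < a := by positivity
    set P : Euc (m+1) → (Fin m → ℝ) := fun z i => z i.castSucc with hP
    have hPlip : LipschitzWith 1 P := by
      refine LipschitzWith.of_dist_le_mul fun z z' => ?_
      rw [NNReal.coe_one, one_mul]
      refine (dist_pi_le_iff dist_nonneg).mpr fun i => ?_
      have h1 : dist (P z i) (P z' i) = |(z - z') i.castSucc| := by
        rw [hP, Real.dist_eq]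
        norm_num
      rw [h1, dist_eq_norm]
      exact abs_apply_le_norm _ _
    set box : Set (Fin m → ℝ) := Set.univ.pi fun _ => Set.Icc (-a) a with hbox
    have hvol : (0:ℝ≥0∞) < volume box := by
      rw [hbox, volume_pi_pi]
      simp only [Real.volume_Icc, Finset.prod_const, Finset.card_univ, Fintype.card_fin]
      have h2 : (0:ℝ) < a - -a := by linarith
      rw [pos_iff_ne_zero]
      exact pow_ne_zero _ (ENNReal.ofReal_pos.mpr h2).ne'
    have hsub : box ⊆ P '' (unitSphere (m+1) ∩ Metric.closedBall e δ) := by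
      rintro u hu
      have hui : ∀ i, |u i| ≤ a := by
        intro i
        have h3 := hu i (Set.mem_univ i)
        rw [Set.mem_Icc] at h3
        exact abs_le.mpr h3
      set s : ℝ := ∑ i, u i ^ 2 with hs_def
      have hs0 : 0 ≤ s := Finset.sum_nonneg fun i _ => sq_nonneg _
      have hs_le : s ≤ δ^2 / 4 := by
        have h4 : ∀ i, u i ^ 2 ≤ a ^ 2 := by
          intro i
          rw [← sq_abs]
          exact pow_le_pow_left₀ (abs_nonneg _) (hui i) 2
        have h5 : s ≤ (m:ℝ) * a^2 := by
          calc s ≤ ∑ _i : Fin m, a^2 := Finset.sum_le_sum fun i _ => h4 i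
          _ = (m:ℝ) * a^2 := by rw [Finset.sum_const, Finset.card_univ, Fintype.card_fin,
            nsmul_eq_mul]
        have h6 : ((m:ℝ)) * a^2 ≤ ((m:ℝ)+1) * a^2 := by nlinarith [sq_nonneg a]
        have h7 : ((m:ℝ)+1) * a^2 = δ^2/4 := by
          rw [ha_def, div_pow, mul_pow]
          rw [Real.sq_sqrt hm1.le]
          field_simp
          ring
        linarith
      have hs_le1 : s ≤ 1/4 := by nlinarith
      set c : ℝ := Real.sqrt (1 - s) with hc_def
      have hc0 : 0 ≤ c := Real.sqrt_nonneg _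
      have h1s : 0 ≤ 1 - s := by linarith
      have hc_sq : c ^ 2 = 1 - s := Real.sq_sqrt h1s
      have hc1 : c ≤ 1 := by nlinarith
      have hc_ge : 1 - s ≤ c := by nlinarith
      set z : Euc (m+1) := WithLp.toLp 2 (fun j => Fin.snoc (α := fun _ => ℝ) u c j : Fin (m+1) → ℝ) with hz_def
      have hz_cast : ∀ i : Fin m, z i.castSucc = u i := by
        intro i; rw [hz_def]; exact Fin.snoc_castSucc (α := fun _ => ℝ) c u i
      have hz_last : z (Fin.last m) = c := by
        rw [hz_def]; exact Fin.snoc_last (α := fun _ => ℝ) c u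
      have hsum : ∑ j, z j ^ 2 = 1 := by
        rw [Fin.sum_univ_castSucc]
        have : ∀ i : Fin m, z i.castSucc ^ 2 = u i ^ 2 := fun i => by rw [hz_cast i]
        rw [Finset.sum_congr rfl fun i _ => this i, hz_last, hc_sq, ← hs_def]
        ring
      have hz_sphere : z ∈ unitSphere (m+1) := by
        rw [mem_unitSphere_iff, EuclideanSpace.norm_eq]
        have h8 : ∀ j, ‖z j‖ ^ 2 = z j ^ 2 := fun j => by rw [Real.norm_eq_abs, sq_abs]
        rw [Finset.sum_congr rfl fun j _ => h8 j, hsum, Real.sqrt_one]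
      have hz_ball : z ∈ Metric.closedBall e δ := by
        rw [Metric.mem_closedBall, dist_eq_norm]
        have h9 : ‖z - e‖ = Real.sqrt (∑ j, (z j - e j) ^ 2) := by
          rw [EuclideanSpace.norm_eq]
          congr 1
          refine Finset.sum_congr rfl fun j _ => ?_
          have : (z - e) j = z j - e j := rfl
          rw [this, Real.norm_eq_abs, sq_abs]
        rw [h9]
        have he_cast : ∀ i : Fin m, e i.castSucc = 0 := by
          intro i
          rw [he_def, EuclideanSpace.single_apply, if_neg (Fin.castSucc_lt_last i).ne]
        have he_last : e (Fin.last m) = 1 := by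
          rw [he_def, EuclideanSpace.single_apply, if_pos rfl]
        have h10 : ∑ j, (z j - e j) ^ 2 = s + (c - 1)^2 := by
          rw [Fin.sum_univ_castSucc]
          have : ∀ i : Fin m, (z i.castSucc - e i.castSucc) ^ 2 = u i ^ 2 := fun i => by
            rw [hz_cast i, he_cast i, sub_zero]
          rw [Finset.sum_congr rfl fun i _ => this i, hz_last, he_last, ← hs_def]
        rw [h10]
        have h11 : s + (c-1)^2 ≤ δ^2 := by nlinarith
        calc Real.sqrt (s + (c-1)^2) ≤ Real.sqrt (δ^2) := Real.sqrt_le_sqrt h11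
        _ = δ := Real.sqrt_sq hδ0.le
      exact ⟨z, ⟨hz_sphere, hz_ball⟩, funext fun i => hz_cast i⟩
    -- chain of measures
    have hpi : (μH[(m:ℝ)] : Measure (Fin m → ℝ)) = volume := by
      have h12 := MeasureTheory.hausdorffMeasure_pi_real (ι := Fin m)
      rwa [Fintype.card_fin] at h12
    have hstep1 : volume box ≤ μH[(m:ℝ)] (P '' (unitSphere (m+1) ∩ Metric.closedBall e δ)) := by
      rw [hpi]
      exact measure_mono hsub
    have hstep2 := hPlip.hausdorffMeasure_image_le (show (0:ℝ) ≤ (m:ℝ) by positivity)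
      (unitSphere (m+1) ∩ Metric.closedBall e δ)
    have hdim : ((m+1:ℕ):ℝ) - 1 = (m:ℝ) := by push_cast; ring
    have hsm : sphereMeasure (m+1) (unitSphere (m+1) ∩ Metric.closedBall e δ)
        = μH[(m:ℝ)] (unitSphere (m+1) ∩ Metric.closedBall e δ) := by
      rw [sphereMeasure, hdim]
    rw [hsm]
    calc (0:ℝ≥0∞) < volume box := hvol
    _ ≤ μH[(m:ℝ)] (P '' (unitSphere (m+1) ∩ Metric.closedBall e δ)) := hstep1
    _ ≤ ((1:ℝ≥0):ℝ≥0∞) ^ (m:ℝ) * μH[(m:ℝ)] (unitSphere (m+1) ∩ Metric.closedBall e δ) := hstep2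
    _ = μH[(m:ℝ)] (unitSphere (m+1) ∩ Metric.closedBall e δ) := by
        rw [ENNReal.coe_one, ENNReal.one_rpow, one_mul]
  · intro w hw
    have hw_norm : ‖w‖ = 1 := mem_unitSphere_iff.mp hw
    set r := (Submodule.reflection (ℝ ∙ (w - e))ᗮ : Euc (m+1) ≃ₗᵢ[ℝ] Euc (m+1)) with hr_def
    have hrw : r w = e := Submodule.reflection_sub (by rw [hw_norm, he_norm])
    have hsub2 : (unitSphere (m+1) ∩ Metric.closedBall e δ)
        ⊆ r '' (unitSphere (m+1) ∩ Metric.closedBall w δ) := by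
      rintro v ⟨hv1, hv2⟩
      refine ⟨r.symm v, ⟨?_, ?_⟩, r.apply_symm_apply v⟩
      · rw [mem_unitSphere_iff]
        rw [show ‖r.symm v‖ = ‖v‖ from r.symm.norm_map v]
        exact mem_unitSphere_iff.mp hv1
      · rw [Metric.mem_closedBall] at hv2 ⊢
        calc dist (r.symm v) w = dist (r (r.symm v)) (r w) := (r.dist_map _ _).symm
        _ = dist v e := by rw [r.apply_symm_apply, hrw]
        _ ≤ δ := hv2
    have hd0 : (0:ℝ) ≤ ((m+1:ℕ):ℝ) - 1 := by push_cast; linarith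
    calc sphereMeasure (m+1) (unitSphere (m+1) ∩ Metric.closedBall e δ)
        ≤ sphereMeasure (m+1) (r '' (unitSphere (m+1) ∩ Metric.closedBall w δ)) :=
          measure_mono hsub2
    _ = sphereMeasure (m+1) (unitSphere (m+1) ∩ Metric.closedBall w δ) := by
        rw [sphereMeasure]
        exact (r.isometry).hausdorffMeasure_image (Or.inl hd0) _


lemma rpow_unpow {t : ℝ} {q : ℝ} (hq : q ≠ 0) (ht : 0 ≤ t) {C : ℝ≥0∞} (hC : C ≠ ∞)
    (hqpos : 0 ≤ q) (h : ENNReal.ofReal (t ^ q) ≤ C) : t ≤ C.toReal ^ (1/q) := by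
  have h1 : t ^ q ≤ C.toReal := (ENNReal.ofReal_le_iff_le_toReal hC).mp h
  have h2 : (t ^ q) ^ (1/q) ≤ C.toReal ^ (1/q) :=
    Real.rpow_le_rpow (Real.rpow_nonneg ht q) h1 (by positivity)
  rwa [← Real.rpow_mul ht, mul_one_div, div_self hq, Real.rpow_one] at h2


lemma omega_pointwise_bound {n : ℕ} (hn : 2 ≤ n) {q : ℝ} (hq1 : 1 < q)
    {Ω : Euc n → Euc n → ℝ} {δ₀ : ℝ} (hδ₀ : δ₀ ∈ Set.Ioo (0:ℝ) 1)
    (hA : SphereLrBound' n q Ω) (hW : omegaMod n q Ω δ₀ < ∞) :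
    ∃ B : ℝ, 1 ≤ B ∧ ∀ (x w : Euc n), w ∈ unitSphere n → |Ω x w| ≤ B := by
  have hq0 : (0:ℝ) < q := by linarith
  have hqne : q ≠ 0 := hq0.ne'
  obtain ⟨m₀, hm₀, hcap⟩ := cap_pos hn (show (0:ℝ) < δ₀/2 by linarith [hδ₀.1])
    (show δ₀/2 ≤ 1 by linarith [hδ₀.2])
  set Asup : ℝ≥0∞ := ⨆ x : Euc n, ⨆ ρ : ℝ≥0,
    (∫⁻ z in unitSphere n,
      ENNReal.ofReal (|Ω (x + (ρ : ℝ) • z) z| ^ q) ∂sphereMeasure n) ^ (1 / q) with hAsup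
  have hAlt : Asup < ∞ := hA
  set Wsup : ℝ≥0∞ := omegaMod n q Ω δ₀ with hWsup
  set Aq : ℝ≥0∞ := Asup ^ q with hAq
  set Wq : ℝ≥0∞ := Wsup ^ q with hWq
  have hAqne : Aq ≠ ∞ := (ENNReal.rpow_lt_top_of_nonneg hq0.le hAlt.ne).ne
  have hWqne : Wq ≠ ∞ := (ENNReal.rpow_lt_top_of_nonneg hq0.le hW.ne).ne
  have hpow_out : ∀ u : ℝ≥0∞, ∀ v : ℝ≥0∞, u ^ (1/q) ≤ v → u ≤ v ^ q := by
    intro u v h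
    have h2 : (u ^ (1/q)) ^ q ≤ v ^ q := ENNReal.rpow_le_rpow h hq0.le
    rwa [← ENNReal.rpow_mul, one_div, inv_mul_cancel₀ hqne, ENNReal.rpow_one] at h2
  -- integrated bounds at ρ = 0
  have hAx : ∀ x : Euc n,
      (∫⁻ z in unitSphere n, ENNReal.ofReal (|Ω x z| ^ q) ∂sphereMeasure n) ≤ Aq := by
    intro x
    refine hpow_out _ _ ?_
    have h1 := le_iSup₂ (f := fun (x : Euc n) (ρ : ℝ≥0) =>
      (∫⁻ z in unitSphere n,
        ENNReal.ofReal (|Ω (x + (ρ : ℝ) • z) z| ^ q) ∂sphereMeasure n) ^ (1 / q)) x 0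
    simpa only [NNReal.coe_zero, zero_smul, add_zero] using h1
  have hWx : ∀ x : Euc n,
      (∫⁻ z in unitSphere n,
        (⨆ y : {y : Euc n // y ∈ unitSphere n ∧ ‖y - z‖ ≤ δ₀},
          ENNReal.ofReal (|Ω x (y : Euc n) - Ω x z| ^ q)) ∂sphereMeasure n) ≤ Wq := by
    intro x
    refine hpow_out _ _ ?_
    have h1 := le_iSup₂ (f := fun (x : Euc n) (ρ : ℝ≥0) =>
      (∫⁻ z in unitSphere n,
        (⨆ y : {y : Euc n // y ∈ unitSphere n ∧ ‖y - z‖ ≤ δ₀},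
          ENNReal.ofReal
            (|Ω (x + (ρ : ℝ) • z) (y : Euc n) - Ω (x + (ρ : ℝ) • z) z| ^ q))
        ∂sphereMeasure n) ^ (1 / q)) x 0
    simpa only [NNReal.coe_zero, zero_smul, add_zero, hWsup, omegaMod] using h1
  set A' : ℝ≥0∞ := Aq / m₀ + 1 with hA'
  set W' : ℝ≥0∞ := Wq / m₀ + 1 with hW'
  have hA'ne : A' ≠ ∞ := by
    rw [hA']
    exact (ENNReal.add_lt_top.mpr ⟨ENNReal.div_lt_top hAqne hm₀.ne', ENNReal.one_lt_top⟩).ne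
  have hW'ne : W' ≠ ∞ := by
    rw [hW']
    exact (ENNReal.add_lt_top.mpr ⟨ENNReal.div_lt_top hWqne hm₀.ne', ENNReal.one_lt_top⟩).ne
  refine ⟨max 1 (A'.toReal ^ (1/q) + 2 * W'.toReal ^ (1/q)), le_max_left _ _, ?_⟩
  intro x w hw
  set K := unitSphere n ∩ Metric.closedBall w (δ₀/2) with hK
  have hKmeas : MeasurableSet K :=
    (Metric.isClosed_sphere.measurableSet).inter measurableSet_closedBall
  have hKm : m₀ ≤ sphereMeasure n K := hcap w hw
  -- generic selection of a point with small value
  have hsel : ∀ (F : Euc n → ℝ≥0∞) (C : ℝ≥0∞), C ≠ ∞ →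
      (∫⁻ z in unitSphere n, F z ∂sphereMeasure n) ≤ C →
      ∃ z, z ∈ K ∧ F z < C / m₀ + 1 := by
    intro F C hCne hC
    have h1 : (⨅ z : K, F z) * m₀ ≤ C := by
      calc (⨅ z : K, F z) * m₀ ≤ (⨅ z : K, F z) * sphereMeasure n K :=
            mul_le_mul_right hKm _
      _ = ∫⁻ _z in K, (⨅ z' : K, F z') ∂sphereMeasure n := (setLIntegral_const _ _).symm
      _ ≤ ∫⁻ z in K, F z ∂sphereMeasure n :=
            setLIntegral_mono' hKmeas fun z hz => iInf_le (fun z' : K => F z') ⟨z, hz⟩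
      _ ≤ ∫⁻ z in unitSphere n, F z ∂sphereMeasure n :=
            lintegral_mono_set Set.inter_subset_left
      _ ≤ C := hC
    have h2 : (⨅ z : K, F z) ≤ C / m₀ :=
      (ENNReal.le_div_iff_mul_le (Or.inl hm₀.ne') (Or.inr hCne)).mpr h1
    have h3 : (⨅ z : K, F z) < C / m₀ + 1 :=
      lt_of_le_of_lt h2 (ENNReal.lt_add_right (ENNReal.div_lt_top hCne hm₀.ne').ne one_ne_zero)
    obtain ⟨⟨z, hz⟩, hzlt⟩ := iInf_lt_iff.mp h3
    exact ⟨z, hz, hzlt⟩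
  obtain ⟨z₀, hz₀K, hz₀lt⟩ := hsel (fun z => ENNReal.ofReal (|Ω x z| ^ q)) Aq hAqne (hAx x)
  obtain ⟨z₁, hz₁K, hz₁lt⟩ := hsel (fun z =>
    ⨆ y : {y : Euc n // y ∈ unitSphere n ∧ ‖y - z‖ ≤ δ₀},
      ENNReal.ofReal (|Ω x (y : Euc n) - Ω x z| ^ q)) Wq hWqne (hWx x)
  -- distances
  have hz₁w : ‖w - z₁‖ ≤ δ₀ := by
    have h4 : dist z₁ w ≤ δ₀/2 := Metric.mem_closedBall.mp hz₁K.2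
    have h5 : ‖w - z₁‖ = dist z₁ w := by rw [dist_comm, dist_eq_norm]
    rw [h5]; linarith [hδ₀.1]
  have hz₀z₁ : ‖z₀ - z₁‖ ≤ δ₀ := by
    have h4 : dist z₁ w ≤ δ₀/2 := Metric.mem_closedBall.mp hz₁K.2
    have h5 : dist z₀ w ≤ δ₀/2 := Metric.mem_closedBall.mp hz₀K.2
    rw [← dist_eq_norm]
    calc dist z₀ z₁ ≤ dist z₀ w + dist w z₁ := dist_triangle _ _ _
    _ ≤ δ₀/2 + δ₀/2 := add_le_add h5 (by rwa [dist_comm])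
    _ = δ₀ := by ring
  -- real bounds
  have h₀ : |Ω x z₀| ≤ A'.toReal ^ (1/q) :=
    rpow_unpow hqne (abs_nonneg _) hA'ne hq0.le hz₀lt.le
  have hby : ∀ y : Euc n, y ∈ unitSphere n → ‖y - z₁‖ ≤ δ₀ →
      |Ω x y - Ω x z₁| ≤ W'.toReal ^ (1/q) := by
    intro y hy1 hy2
    refine rpow_unpow hqne (abs_nonneg _) hW'ne hq0.le ?_
    refine le_trans ?_ hz₁lt.le
    exact le_iSup (fun y' : {y' : Euc n // y' ∈ unitSphere n ∧ ‖y' - z₁‖ ≤ δ₀} =>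
      ENNReal.ofReal (|Ω x (y' : Euc n) - Ω x z₁| ^ q)) ⟨y, hy1, hy2⟩
  have h₁ : |Ω x z₀ - Ω x z₁| ≤ W'.toReal ^ (1/q) := hby z₀ hz₀K.1 hz₀z₁
  have h₂ : |Ω x w - Ω x z₁| ≤ W'.toReal ^ (1/q) := hby w hw hz₁w
  refine le_trans ?_ (le_max_right _ _)
  have htri : |Ω x w| ≤ |Ω x z₀| + |Ω x z₀ - Ω x z₁| + |Ω x w - Ω x z₁| := by
    have e1 : Ω x w = Ω x z₀ - (Ω x z₀ - Ω x z₁) + (Ω x w - Ω x z₁) := by ring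
    calc |Ω x w| = |Ω x z₀ - (Ω x z₀ - Ω x z₁) + (Ω x w - Ω x z₁)| := by rw [← e1]
    _ ≤ |Ω x z₀ - (Ω x z₀ - Ω x z₁)| + |Ω x w - Ω x z₁| := abs_add_le _ _
    _ ≤ |Ω x z₀| + |Ω x z₀ - Ω x z₁| + |Ω x w - Ω x z₁| := by
        have := abs_sub (Ω x z₀) (Ω x z₀ - Ω x z₁)
        linarith [abs_sub_abs_le_abs_sub (Ω x z₀) (Ω x z₀ - Ω x z₁), abs_sub (Ω x z₀) (Ω x z₀ - Ω x z₁)]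
  linarith


lemma kker_bound {n : ℕ} {α : ℝ} (hα : α < n) {Ω : Euc n → Euc n → ℝ} {B : ℝ} (hB : 0 ≤ B)
    (hΩB : ∀ x w, w ∈ unitSphere n → |Ω x w| ≤ B) (x z : Euc n) :
    |Kker n α Ω x z| ≤ B * ‖z‖ ^ (α - (n:ℝ)) := by
  rcases eq_or_ne z 0 with rfl | hz
  · rw [Kker]
    rw [norm_zero, Real.zero_rpow (show (n:ℝ) - α ≠ 0 by linarith),
      Real.zero_rpow (show α - (n:ℝ) ≠ 0 by linarith), div_zero, abs_zero, mul_zero]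
  · have hz0 : 0 < ‖z‖ := norm_pos_iff.mpr hz
    have hw : (‖z‖⁻¹ • z) ∈ unitSphere n := by
      rw [mem_unitSphere_iff, norm_smul, norm_inv, norm_norm, inv_mul_cancel₀ hz0.ne']
    have h1 : |Kker n α Ω x z| = |Ω x (‖z‖⁻¹ • z)| / ‖z‖ ^ ((n:ℝ) - α) := by
      rw [Kker, abs_div, abs_of_pos (Real.rpow_pos_of_pos hz0 _)]
    rw [h1]
    have h2 : ‖z‖ ^ (α - (n:ℝ)) = (‖z‖ ^ ((n:ℝ) - α))⁻¹ := by
      rw [show α - (n:ℝ) = -((n:ℝ) - α) by ring, Real.rpow_neg hz0.le]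
    rw [h2, div_eq_mul_inv]
    exact mul_le_mul_of_nonneg_right (hΩB x _ hw) (by positivity)


lemma half_pow_eq {j : ℕ} : ((1:ℝ)/2) ^ j = (2:ℝ) ^ (-(j:ℝ)) := by
  rw [one_div, inv_pow, ← Real.rpow_natCast (2:ℝ) j, ← Real.rpow_neg (by norm_num : (0:ℝ) ≤ 2)]


lemma kernel_ball_lintegral {n : ℕ} (hn : 1 ≤ n) {α : ℝ} (hα0 : 0 < α) (hαn : α < n) :
    ∃ Ξ : ℝ≥0∞, Ξ ≠ ∞ ∧ ∀ R : ℝ, 0 < R →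
      (∫⁻ z in Metric.closedBall (0 : Euc n) R, ENNReal.ofReal (‖z‖ ^ (α - (n:ℝ))) ∂volume)
        ≤ ENNReal.ofReal (R ^ α) * Ξ := by
  set V : ℝ≥0∞ := volume (Metric.ball (0 : Euc n) 1) with hV
  have hVne : V ≠ ∞ := measure_ball_lt_top.ne
  set ρ : ℝ := (2:ℝ) ^ (-α) with hρ
  have hρ0 : 0 < ρ := Real.rpow_pos_of_pos two_pos _
  have hρ1 : ρ < 1 := Real.rpow_lt_one_of_one_lt_of_neg one_lt_two (by linarith)
  have hgeom : (∑' k : ℕ, (ENNReal.ofReal ρ) ^ k) = (1 - ENNReal.ofReal ρ)⁻¹ :=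
    ENNReal.tsum_geometric _
  have hρlt : ENNReal.ofReal ρ < 1 := by
    rw [← ENNReal.ofReal_one]
    exact ENNReal.ofReal_lt_ofReal_iff one_pos |>.mpr hρ1
  have hgeom_ne : (1 - ENNReal.ofReal ρ)⁻¹ ≠ ∞ := by
    rw [Ne, ENNReal.inv_eq_top, tsub_eq_zero_iff_le]
    exact not_le.mpr hρlt
  set c2 : ℝ := (2:ℝ) ^ ((n:ℝ) - α) with hc2
  have hc2pos : 0 < c2 := Real.rpow_pos_of_pos two_pos _
  refine ⟨ENNReal.ofReal c2 * V * (1 - ENNReal.ofReal ρ)⁻¹,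
    ENNReal.mul_ne_top (ENNReal.mul_ne_top ENNReal.ofReal_ne_top hVne) hgeom_ne, ?_⟩
  intro R hR
  set f : Euc n → ℝ≥0∞ := fun z => ENNReal.ofReal (‖z‖ ^ (α - (n:ℝ))) with hf
  set Sh : ℕ → Set (Euc n) := fun k =>
    Metric.closedBall 0 (R * (1/2:ℝ)^k) \ Metric.closedBall 0 (R * (1/2:ℝ)^(k+1)) with hSh
  -- the per-shell constant identity
  have hck : ∀ k : ℕ, (R * (1/2:ℝ)^(k+1)) ^ (α - (n:ℝ)) * (R * (1/2:ℝ)^k) ^ (n:ℕ)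
      = R ^ α * (c2 * ρ^k) := by
    intro k
    have h2 : (0:ℝ) < 2 := two_pos
    have hRpos : (0:ℝ) < R := hR
    have hq1 : (0:ℝ) < (1/2:ℝ)^(k+1) := by positivity
    have hq2 : (0:ℝ) < (1/2:ℝ)^k := by positivity
    rw [← Real.rpow_natCast (R * (1/2:ℝ)^k) n]
    rw [Real.mul_rpow hR.le hq1.le, Real.mul_rpow hR.le hq2.le]
    rw [half_pow_eq (j := k+1), half_pow_eq (j := k)]
    rw [← Real.rpow_mul h2.le, ← Real.rpow_mul h2.le]
    rw [mul_mul_mul_comm]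
    rw [← Real.rpow_add hR, ← Real.rpow_add h2]
    have e1 : α - (n:ℝ) + (n:ℝ) = α := by ring
    rw [e1]
    congr 1
    rw [hc2, hρ, ← Real.rpow_natCast ((2:ℝ) ^ (-α)) k, ← Real.rpow_mul h2.le,
      ← Real.rpow_add h2]
    congr 1
    push_cast
    ring
  -- cover of the ball by the shells (plus the origin)
  have hcover : Metric.closedBall (0:Euc n) R ⊆ {0} ∪ ⋃ k, Sh k := by
    intro y hy
    rcases eq_or_ne y 0 with rfl | hy0
    · exact Or.inl rfl
    right
    have hy_norm : 0 < ‖y‖ := norm_pos_iff.mpr hy0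
    have hy_le : ‖y‖ ≤ R := by
      have := Metric.mem_closedBall.mp hy
      rwa [dist_zero_right] at this
    have hex : ∃ k : ℕ, R * (1/2:ℝ)^(k+1) < ‖y‖ := by
      obtain ⟨k, hk⟩ := exists_pow_lt_of_lt_one (show (0:ℝ) < ‖y‖/R by positivity)
        (show (1/2:ℝ) < 1 by norm_num)
      refine ⟨k, ?_⟩
      have h5 : ((1:ℝ)/2)^(k+1) ≤ (1/2:ℝ)^k :=
        pow_le_pow_of_le_one (by norm_num) (by norm_num) (Nat.le_succ k)
      have h6 : (1/2:ℝ)^(k+1) < ‖y‖/R := lt_of_le_of_lt h5 hk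
      calc R * (1/2:ℝ)^(k+1) < R * (‖y‖/R) := by
            exact mul_lt_mul_of_pos_left h6 hR
      _ = ‖y‖ := by field_simp
    set k := Nat.find hex with hk_def
    have hk1 : R * (1/2:ℝ)^(k+1) < ‖y‖ := Nat.find_spec hex
    have hk2 : ‖y‖ ≤ R * (1/2:ℝ)^k := by
      rcases Nat.eq_zero_or_pos k with hk0 | hkpos
      · rw [hk0]; simpa using hy_le
      · obtain ⟨j, hj⟩ := Nat.exists_eq_succ_of_ne_zero hkpos.ne'
        have h7 : j < Nat.find hex := by omega
        have h8 := Nat.find_min hex h7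
        rw [not_lt] at h8
        rw [hj]
        exact h8
    refine Set.mem_iUnion.mpr ⟨k, ?_, ?_⟩
    · rw [Metric.mem_closedBall, dist_zero_right]; exact hk2
    · rw [Metric.mem_closedBall, dist_zero_right, not_le]; exact hk1
  have shellbound : ∀ k : ℕ, ∫⁻ z in Sh k, f z ∂volume ≤ ENNReal.ofReal (R^α * (c2 * ρ^k)) * V := by
    intro k
    have hrad : (0:ℝ) < R * (1/2:ℝ)^(k+1) := by positivity
    have hrad2 : (0:ℝ) ≤ R * (1/2:ℝ)^k := by positivity
    have hmeas_sh : MeasurableSet (Sh k) := measurableSet_closedBall.diff measurableSet_closedBall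
    have hbound : ∀ z ∈ Sh k, f z ≤ ENNReal.ofReal ((R * (1/2:ℝ)^(k+1)) ^ (α - (n:ℝ))) := by
      intro z hz
      have h2 : R * (1/2:ℝ)^(k+1) < ‖z‖ := by
        have h3 := hz.2
        rwa [Metric.mem_closedBall, dist_zero_right, not_le] at h3
      exact ENNReal.ofReal_le_ofReal
        (Real.rpow_le_rpow_of_nonpos hrad h2.le (by linarith))
    calc ∫⁻ z in Sh k, f z ∂volume
        ≤ ∫⁻ _z in Sh k, ENNReal.ofReal ((R * (1/2:ℝ)^(k+1)) ^ (α-(n:ℝ))) ∂volume :=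
          setLIntegral_mono' hmeas_sh hbound
      _ = ENNReal.ofReal ((R * (1/2:ℝ)^(k+1)) ^ (α-(n:ℝ))) * volume (Sh k) :=
          setLIntegral_const _ _
      _ ≤ ENNReal.ofReal ((R * (1/2:ℝ)^(k+1)) ^ (α-(n:ℝ)))
            * volume (Metric.closedBall (0:Euc n) (R * (1/2:ℝ)^k)) :=
          mul_le_mul_right (measure_mono Set.diff_subset) _
      _ = ENNReal.ofReal ((R * (1/2:ℝ)^(k+1)) ^ (α-(n:ℝ)))
            * (ENNReal.ofReal ((R * (1/2:ℝ)^k) ^ Module.finrank ℝ (Euc n)) * V) := by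
          rw [Measure.addHaar_closedBall volume (0:Euc n) hrad2]
      _ = ENNReal.ofReal (R^α * (c2 * ρ^k)) * V := by
          rw [← mul_assoc, ← ENNReal.ofReal_mul (Real.rpow_nonneg hrad.le _)]
          congr 2
          rw [show Module.finrank ℝ (Euc n) = n from finrank_euclideanSpace_fin]
          exact hck k
  calc ∫⁻ z in Metric.closedBall (0:Euc n) R, f z ∂volume
      ≤ ∫⁻ z in ({0} ∪ ⋃ k, Sh k : Set (Euc n)), f z ∂volume := lintegral_mono_set hcover
    _ ≤ (∫⁻ z in ({0} : Set (Euc n)), f z ∂volume) + ∫⁻ z in ⋃ k, Sh k, f z ∂volume := by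
        refine le_trans (lintegral_mono' (Measure.restrict_union_le _ _) le_rfl) ?_
        rw [lintegral_add_measure]
    _ = ∫⁻ z in ⋃ k, Sh k, f z ∂volume := by
        have h0 : volume ({(0:Euc n)} : Set (Euc n)) = 0 := by
          haveI : Nonempty (Fin n) := ⟨⟨0, by omega⟩⟩
          haveI : Nontrivial (Euc n) := inferInstance
          exact measure_singleton _
        rw [Measure.restrict_eq_zero.mpr h0, lintegral_zero_measure, zero_add]
    _ ≤ ∑' k, ∫⁻ z in Sh k, f z ∂volume := lintegral_iUnion_le _ _
    _ ≤ ∑' k, ENNReal.ofReal (R^α * (c2 * ρ^k)) * V :=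
        ENNReal.tsum_le_tsum (fun k => shellbound k)
    _ = ENNReal.ofReal (R^α) * (ENNReal.ofReal c2 * V * (1 - ENNReal.ofReal ρ)⁻¹) := by
        have hsummand : ∀ k:ℕ, ENNReal.ofReal (R^α * (c2 * ρ^k)) * V
            = (ENNReal.ofReal (R^α) * ENNReal.ofReal c2 * V) * (ENNReal.ofReal ρ)^k := by
          intro k
          rw [ENNReal.ofReal_mul (Real.rpow_nonneg hR.le _), ENNReal.ofReal_mul hc2pos.le,
            ENNReal.ofReal_pow hρ0.le]
          ring
        rw [tsum_congr hsummand, ENNReal.tsum_mul_left, hgeom]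
        ring


/-- **Corollary 6.2.** Let `n ≥ 2`, `0 < α ≤ 1` and `q = n/(n-α)`. Suppose
`Ω ∈ Din^{n/(n-α)}_α(S^{n-1})`. Then `‖T_{Ω,α} f‖_{WL^{n/(n-α)}} ≤ C ‖f‖_{L^1}` for all
`f ∈ L^1(ℝ^n)`. -/
theorem fractional_integral_weak_type
    (n : ℕ) (hn : 2 ≤ n) (α q : ℝ) (hα0 : 0 < α) (hα1 : α ≤ 1)
    (hq : q = (n : ℝ) / ((n : ℝ) - α))
    (Ω : Euc n → Euc n → ℝ) (hΩ : DinClass n q α Ω) :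
    ∃ C : ℝ, 0 < C ∧ ∀ f : Euc n → ℝ, Integrable f volume →
      wnorm n q (TOmegaAlpha n α Ω f) ≤ ENNReal.ofReal C * eLpNorm f 1 volume := by
  have hn1 : (2:ℝ) ≤ (n:ℝ) := by exact_mod_cast hn
  have hnα : (0:ℝ) < (n:ℝ) - α := by linarith
  have hαn : α < (n:ℝ) := by linarith
  have hq0 : 0 < q := by rw [hq]; positivity
  have hq1 : 1 < q := by rw [hq, lt_div_iff₀ hnα]; linarith
  have hqne : q ≠ 0 := hq0.ne'
  have hqinv : 0 < 1/q := by positivity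
  obtain ⟨hHom, hA, hCancel, hDini⟩ := hΩ (α/2) (by linarith) (by linarith)
  -- find δ₀ ∈ (0,1) with finite modulus of continuity
  obtain ⟨δ₀, hδ₀, hWfin⟩ : ∃ δ₀, δ₀ ∈ Set.Ioo (0:ℝ) 1 ∧ omegaMod n q Ω δ₀ < ∞ := by
    by_contra hcon
    push_neg at hcon
    have htop : (∫⁻ δ in Set.Ioo (0:ℝ) 1,
        omegaMod n q Ω δ / ENNReal.ofReal (δ ^ (1 + α/2))) = ∞ := by
      have hge : ∀ᵐ δ ∂(volume.restrict (Set.Ioo (0:ℝ) 1)),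
          omegaMod n q Ω δ / ENNReal.ofReal (δ ^ (1 + α/2)) = ∞ := by
        filter_upwards [ae_restrict_mem measurableSet_Ioo] with δ hδ
        rw [top_le_iff.mp (hcon δ hδ)]
        exact ENNReal.top_div_of_ne_top ENNReal.ofReal_ne_top
      rw [lintegral_congr_ae hge, lintegral_const, Measure.restrict_apply_univ, Real.volume_Ioo]
      simp
    rw [htop] at hDini
    exact absurd hDini (lt_irrefl _)
  -- uniform pointwise bound for Ω on the sphere
  obtain ⟨B, hB1, hB⟩ := omega_pointwise_bound hn hq1 hδ₀ hA hWfin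
  have hB0 : (0:ℝ) < B := lt_of_lt_of_le one_pos hB1
  -- kernel constant
  obtain ⟨Ξ, hΞne, hΞ⟩ := kernel_ball_lintegral (by omega : 1 ≤ n) hα0 hαn
  set Θ : ℝ≥0∞ := Ξ ^ (1/q) with hΘ
  have hΘne : Θ ≠ ∞ := (ENNReal.rpow_lt_top_of_nonneg hqinv.le hΞne).ne
  set C : ℝ := (Θ * ENNReal.ofReal (2*B)).toReal + 1 with hC
  have hCpos : 0 < C := by
    rw [hC]; positivity
  have hCbound : Θ * ENNReal.ofReal (2*B) ≤ ENNReal.ofReal C := by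
    have hfin : Θ * ENNReal.ofReal (2*B) ≠ ∞ := ENNReal.mul_ne_top hΘne ENNReal.ofReal_ne_top
    calc Θ * ENNReal.ofReal (2*B) = ENNReal.ofReal ((Θ * ENNReal.ofReal (2*B)).toReal) :=
          (ENNReal.ofReal_toReal hfin).symm
    _ ≤ ENNReal.ofReal C := ENNReal.ofReal_le_ofReal (by rw [hC]; linarith)
  refine ⟨C, hCpos, ?_⟩
  intro f hf
  set L : ℝ≥0∞ := eLpNorm f 1 volume with hL
  -- measurable representative
  obtain ⟨f₀, hf₀meas, hff₀⟩ : ∃ f₀ : Euc n → ℝ, StronglyMeasurable f₀ ∧ f =ᵐ[volume] f₀ :=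
    ⟨hf.1.mk f, hf.1.stronglyMeasurable_mk, hf.1.ae_eq_mk⟩
  have hf₀m : Measurable f₀ := hf₀meas.measurable
  have hLf₀ : (∫⁻ y, ENNReal.ofReal |f₀ y| ∂volume) = L := by
    rw [hL, eLpNorm_one_eq_lintegral_enorm]
    refine lintegral_congr_ae ?_
    filter_upwards [hff₀] with y hy
    rw [← hy, Real.enorm_eq_ofReal_abs]
  -- the dominating potential
  set G : Euc n → ℝ≥0∞ := fun x =>
    ∫⁻ y, ENNReal.ofReal (‖x - y‖ ^ (α - (n:ℝ))) * ENNReal.ofReal |f₀ y| ∂volume with hG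
  have hTbound : ∀ x : Euc n,
      ENNReal.ofReal |TOmegaAlpha n α Ω f x| ≤ ENNReal.ofReal B * G x := by
    intro x
    by_cases hfin : ENNReal.ofReal B * G x = ∞
    · rw [hfin]; exact le_top
    have hTeq : TOmegaAlpha n α Ω f x = ∫ y, Kker n α Ω x (x - y) * f₀ y ∂volume := by
      rw [TOmegaAlpha]
      refine integral_congr_ae ?_
      filter_upwards [hff₀] with y hy
      rw [hy]
    have hlin : (∫⁻ y, ENNReal.ofReal ‖Kker n α Ω x (x - y) * f₀ y‖ ∂volume)
        ≤ ENNReal.ofReal B * G x := by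
      rw [hG, ← lintegral_const_mul' _ _ (ENNReal.ofReal_ne_top (r := B))]
      refine lintegral_mono fun y => ?_
      rw [Real.norm_eq_abs, abs_mul]
      calc ENNReal.ofReal (|Kker n α Ω x (x-y)| * |f₀ y|)
          ≤ ENNReal.ofReal ((B * ‖x - y‖ ^ (α - (n:ℝ))) * |f₀ y|) :=
            ENNReal.ofReal_le_ofReal
              (mul_le_mul_of_nonneg_right (kker_bound hαn hB0.le hB x (x-y)) (abs_nonneg _))
        _ = ENNReal.ofReal B * (ENNReal.ofReal (‖x-y‖ ^ (α - (n:ℝ))) * ENNReal.ofReal |f₀ y|) := by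
            rw [ENNReal.ofReal_mul (by positivity), ENNReal.ofReal_mul hB0.le, mul_assoc]
    have h1 : |TOmegaAlpha n α Ω f x| ≤ (ENNReal.ofReal B * G x).toReal := by
      rw [hTeq]
      rw [show |∫ y, Kker n α Ω x (x - y) * f₀ y ∂volume|
          = ‖∫ y, Kker n α Ω x (x - y) * f₀ y ∂volume‖ from (Real.norm_eq_abs _).symm]
      refine le_trans (norm_integral_le_lintegral_norm _) ?_
      exact ENNReal.toReal_mono hfin hlin
    calc ENNReal.ofReal |TOmegaAlpha n α Ω f x|
        ≤ ENNReal.ofReal ((ENNReal.ofReal B * G x).toReal) := ENNReal.ofReal_le_ofReal h1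
      _ = ENNReal.ofReal B * G x := ENNReal.ofReal_toReal hfin
  -- trivial case L = 0
  rcases eq_or_ne L 0 with hL0 | hL0
  · have hf0 : f =ᵐ[volume] 0 := (eLpNorm_eq_zero_iff hf.1 one_ne_zero).mp hL0
    have hT0 : ∀ x, TOmegaAlpha n α Ω f x = 0 := by
      intro x
      rw [TOmegaAlpha]
      rw [integral_congr_ae (show (fun y => Kker n α Ω x (x-y) * f y) =ᵐ[volume]
        (fun _ => (0:ℝ)) by filter_upwards [hf0] with y hy; simp [hy])]
      simp
    rw [wnorm]
    refine iSup_le fun c => ?_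
    have hempty : {x : Euc n | (c:ℝ) < |TOmegaAlpha n α Ω f x|} = ∅ := by
      ext x
      simp only [Set.mem_setOf_eq, Set.mem_empty_iff_false, iff_false, not_lt, hT0 x, abs_zero]
      exact c.coe_nonneg
    rw [hempty, measure_empty, ENNReal.zero_rpow_of_pos hqinv, mul_zero]
    exact zero_le'
  -- trivial case L = ∞
  rcases eq_or_ne L ∞ with hLtop | hLtop
  · rw [hLtop, ENNReal.mul_top (by
      rw [Ne, ENNReal.ofReal_eq_zero, not_le]; exact hCpos)]
    exact le_top
  -- main case
  have hlpos : 0 < L.toReal := ENNReal.toReal_pos hL0 hLtop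
  set l : ℝ := L.toReal with hl
  have hLl : L = ENNReal.ofReal l := (ENNReal.ofReal_toReal hLtop).symm
  rw [wnorm]
  refine iSup_le fun c => ?_
  rcases eq_or_ne c 0 with rfl | hc0
  · simp
  have hcpos : (0:ℝ) < (c:ℝ) := by
    have := c.coe_nonneg
    rcases this.lt_or_eq with h | h
    · exact h
    · exact absurd (NNReal.coe_eq_zero.mp h.symm) hc0
  -- choice of radius
  set t : ℝ := 2*B*l/(c:ℝ) with ht
  have htpos : 0 < t := by rw [ht]; positivity
  set R : ℝ := t ^ (1/((n:ℝ) - α)) with hRdef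
  have hRpos : 0 < R := Real.rpow_pos_of_pos htpos _
  have hfar_coef : B * R ^ (α - (n:ℝ)) = (c:ℝ)/(2*l) := by
    rw [hRdef, ← Real.rpow_mul htpos.le]
    rw [show (1/((n:ℝ)-α)) * (α - (n:ℝ)) = -1 by field_simp; ring]
    rw [Real.rpow_neg_one, ht]
    field_simp
  have hRα : R ^ α = t ^ (q - 1) := by
    rw [hRdef, ← Real.rpow_mul htpos.le]
    congr 1
    rw [hq]
    field_simp
    ring
  -- truncated kernel
  set φ : Euc n → ℝ≥0∞ := fun z =>
    (Metric.closedBall (0:Euc n) R).indicator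
      (fun z => ENNReal.ofReal (‖z‖ ^ (α - (n:ℝ)))) z with hφ
  have hφmeas : Measurable φ := by
    refine Measurable.indicator ?_ measurableSet_closedBall
    exact (measurable_norm.pow measurable_const).ennreal_ofReal
  have habs : Measurable fun yv : Euc n => ENNReal.ofReal |f₀ yv| := by
    exact (hf₀m.norm).ennreal_ofReal
  set ψ : Euc n × Euc n → ℝ≥0∞ := fun p => φ (p.1 - p.2) * ENNReal.ofReal |f₀ p.2| with hψ
  have hψmeas : Measurable ψ :=
    (hφmeas.comp (measurable_fst.sub measurable_snd)).mul (habs.comp measurable_snd)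
  set h : Euc n → ℝ≥0∞ := fun x => ∫⁻ y, ψ (x, y) ∂volume with hh
  have hhmeas : Measurable h := hψmeas.lintegral_prod_right'
  -- near part rewrite
  have hnear : ∀ x, h x = ∫⁻ y in Metric.closedBall x R,
      ENNReal.ofReal (‖x - y‖ ^ (α - (n:ℝ))) * ENNReal.ofReal |f₀ y| ∂volume := by
    intro x
    rw [hh, ← lintegral_indicator measurableSet_closedBall]
    refine lintegral_congr fun y => ?_
    have hiff : x - y ∈ Metric.closedBall (0:Euc n) R ↔ y ∈ Metric.closedBall x R := by
      rw [Metric.mem_closedBall, Metric.mem_closedBall, dist_zero_right, ← dist_eq_norm,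
        dist_comm]
    simp only [hψ, hφ]
    by_cases hy : y ∈ Metric.closedBall x R
    · rw [Set.indicator_of_mem hy, Set.indicator_of_mem (hiff.mpr hy)]
    · rw [Set.indicator_of_notMem hy, Set.indicator_of_notMem (fun hc => hy (hiff.mp hc)),
        zero_mul]
  -- splitting
  have hsplit : ∀ x, G x = h x
      + ∫⁻ y in (Metric.closedBall x R)ᶜ,
          ENNReal.ofReal (‖x - y‖ ^ (α - (n:ℝ))) * ENNReal.ofReal |f₀ y| ∂volume := by
    intro x
    rw [hG, hnear x]
    exact (lintegral_add_compl _ measurableSet_closedBall).symm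
  -- far part bound
  have hfar : ∀ x, (∫⁻ y in (Metric.closedBall x R)ᶜ,
      ENNReal.ofReal (‖x - y‖ ^ (α - (n:ℝ))) * ENNReal.ofReal |f₀ y| ∂volume)
      ≤ ENNReal.ofReal (R ^ (α - (n:ℝ))) * L := by
    intro x
    calc (∫⁻ y in (Metric.closedBall x R)ᶜ,
        ENNReal.ofReal (‖x - y‖ ^ (α - (n:ℝ))) * ENNReal.ofReal |f₀ y| ∂volume)
        ≤ ∫⁻ y in (Metric.closedBall x R)ᶜ,
            ENNReal.ofReal (R ^ (α - (n:ℝ))) * ENNReal.ofReal |f₀ y| ∂volume := by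
          refine setLIntegral_mono' measurableSet_closedBall.compl fun y hy => ?_
          have hyx : R < ‖x - y‖ := by
            rw [Set.mem_compl_iff, Metric.mem_closedBall, not_le] at hy
            rw [← dist_eq_norm, dist_comm]
            exact hy
          exact mul_le_mul_left (ENNReal.ofReal_le_ofReal
            (Real.rpow_le_rpow_of_nonpos hRpos hyx.le (by linarith))) _
      _ = ENNReal.ofReal (R ^ (α - (n:ℝ)))
            * ∫⁻ y in (Metric.closedBall x R)ᶜ, ENNReal.ofReal |f₀ y| ∂volume :=
          lintegral_const_mul' _ _ ENNReal.ofReal_ne_top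
      _ ≤ ENNReal.ofReal (R ^ (α - (n:ℝ))) * L := by
          refine mul_le_mul_right ?_ _
          rw [← hLf₀]
          exact setLIntegral_le_lintegral _ _
  have hfarB : ENNReal.ofReal B * (ENNReal.ofReal (R ^ (α - (n:ℝ))) * L)
      = ENNReal.ofReal ((c:ℝ)/2) := by
    rw [← mul_assoc, ← ENNReal.ofReal_mul hB0.le, hfar_coef, hLl,
      ← ENNReal.ofReal_mul (by positivity)]
    congr 1
    field_simp
  -- kernel integral bound
  have hJ : (∫⁻ z, φ z ∂volume) ≤ ENNReal.ofReal (R^α) * Ξ := by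
    simp only [hφ]
    rw [lintegral_indicator measurableSet_closedBall]
    exact hΞ R hRpos
  have hJne : (∫⁻ z, φ z ∂volume) ≠ ∞ :=
    (lt_of_le_of_lt hJ (ENNReal.mul_lt_top ENNReal.ofReal_lt_top hΞne.lt_top)).ne
  have hhint : (∫⁻ x, h x ∂volume) ≤ (ENNReal.ofReal (R^α) * Ξ) * L := by
    rw [hh, lintegral_lintegral_swap hψmeas.aemeasurable]
    have hinner : ∀ y, (∫⁻ x, ψ (x, y) ∂volume)
        = (∫⁻ z, φ z ∂volume) * ENNReal.ofReal |f₀ y| := by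
      intro y
      simp only [hψ]
      rw [lintegral_mul_const' _ _ ENNReal.ofReal_ne_top]
      congr 1
      exact (measurePreserving_sub_right volume y).lintegral_comp hφmeas
    rw [lintegral_congr hinner, lintegral_const_mul' _ _ hJne, hLf₀]
    exact mul_le_mul_left hJ _
  -- Chebyshev
  have hset : {x : Euc n | (c:ℝ) < |TOmegaAlpha n α Ω f x|}
      ⊆ {x : Euc n | ENNReal.ofReal ((c:ℝ)/2) ≤ ENNReal.ofReal B * h x} := by
    intro x hx
    rw [Set.mem_setOf_eq] at hx ⊢
    have h1 : ENNReal.ofReal (c:ℝ) < ENNReal.ofReal B * G x :=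
      lt_of_lt_of_le
        ((ENNReal.ofReal_lt_ofReal_iff (lt_of_le_of_lt c.coe_nonneg hx)).mpr hx) (hTbound x)
    by_contra hcon2
    push_neg at hcon2
    have h2 : ENNReal.ofReal B * G x ≤ ENNReal.ofReal B * h x + ENNReal.ofReal ((c:ℝ)/2) := by
      rw [hsplit x, mul_add]
      refine add_le_add_right ?_ _
      calc ENNReal.ofReal B * (∫⁻ y in (Metric.closedBall x R)ᶜ,
          ENNReal.ofReal (‖x - y‖ ^ (α - (n:ℝ))) * ENNReal.ofReal |f₀ y| ∂volume)
          ≤ ENNReal.ofReal B * (ENNReal.ofReal (R ^ (α - (n:ℝ))) * L) :=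
            mul_le_mul_right (hfar x) _
        _ = ENNReal.ofReal ((c:ℝ)/2) := hfarB
    have h3 : ENNReal.ofReal (c:ℝ) < ENNReal.ofReal ((c:ℝ)/2) + ENNReal.ofReal ((c:ℝ)/2) :=
      lt_of_lt_of_le h1 (le_trans h2 (add_le_add_left hcon2.le _))
    rw [← ENNReal.ofReal_add (by positivity) (by positivity),
      show (c:ℝ)/2 + (c:ℝ)/2 = (c:ℝ) by ring] at h3
    exact absurd h3 (lt_irrefl _)
  have hmeasure : volume {x : Euc n | (c:ℝ) < |TOmegaAlpha n α Ω f x|}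
      ≤ (ENNReal.ofReal B * ((ENNReal.ofReal (R^α) * Ξ) * L)) / ENNReal.ofReal ((c:ℝ)/2) := by
    refine le_trans (measure_mono hset) ?_
    have hεne : ENNReal.ofReal ((c:ℝ)/2) ≠ 0 := by
      rw [Ne, ENNReal.ofReal_eq_zero, not_le]; positivity
    rw [ENNReal.le_div_iff_mul_le (Or.inl hεne) (Or.inl ENNReal.ofReal_ne_top)]
    calc volume {x : Euc n | ENNReal.ofReal ((c:ℝ)/2) ≤ ENNReal.ofReal B * h x}
          * ENNReal.ofReal ((c:ℝ)/2)
        = ENNReal.ofReal ((c:ℝ)/2)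
          * volume {x : Euc n | ENNReal.ofReal ((c:ℝ)/2) ≤ ENNReal.ofReal B * h x} :=
          mul_comm _ _
      _ ≤ ∫⁻ x, ENNReal.ofReal B * h x ∂volume :=
          mul_meas_ge_le_lintegral₀ ((measurable_const.mul hhmeas).aemeasurable) _
      _ = ENNReal.ofReal B * ∫⁻ x, h x ∂volume :=
          lintegral_const_mul' _ _ ENNReal.ofReal_ne_top
      _ ≤ ENNReal.ofReal B * ((ENNReal.ofReal (R^α) * Ξ) * L) := mul_le_mul_right hhint _
  have hXbound : volume {x : Euc n | (c:ℝ) < |TOmegaAlpha n α Ω f x|}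
      ≤ Ξ * ENNReal.ofReal (t^q) := by
    refine le_trans hmeasure ?_
    have hinv : (ENNReal.ofReal ((c:ℝ)/2))⁻¹ = ENNReal.ofReal (2/(c:ℝ)) := by
      rw [← ENNReal.ofReal_inv_of_pos (by positivity), inv_div]
    rw [div_eq_mul_inv, hinv, hRα, hLl]
    calc ENNReal.ofReal B * ((ENNReal.ofReal (t^(q-1)) * Ξ) * ENNReal.ofReal l)
          * ENNReal.ofReal (2/(c:ℝ))
        = Ξ * (ENNReal.ofReal B * ENNReal.ofReal (t^(q-1)) * ENNReal.ofReal l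
            * ENNReal.ofReal (2/(c:ℝ))) := by ring
      _ = Ξ * ENNReal.ofReal (B * t^(q-1) * l * (2/(c:ℝ))) := by
          rw [← ENNReal.ofReal_mul hB0.le, ← ENNReal.ofReal_mul (by positivity),
            ← ENNReal.ofReal_mul (by positivity)]
      _ = Ξ * ENNReal.ofReal (t^q) := by
          congr 1
          have e1 : B * t^(q-1) * l * (2/(c:ℝ)) = t * t^(q-1) := by
            rw [ht]; field_simp
          have e2 : t * t^(q-1) = t^q := by
            nth_rewrite 1 [← Real.rpow_one t]
            rw [← Real.rpow_add htpos]
            norm_num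
          rw [e1, e2]
      _ ≤ Ξ * ENNReal.ofReal (t^q) := le_rfl
  calc (c:ℝ≥0∞) * (volume {x : Euc n | (c:ℝ) < |TOmegaAlpha n α Ω f x|}) ^ (1/q)
      ≤ (c:ℝ≥0∞) * (Ξ * ENNReal.ofReal (t^q)) ^ (1/q) :=
        mul_le_mul_right (ENNReal.rpow_le_rpow hXbound hqinv.le) _
    _ = (c:ℝ≥0∞) * (Θ * ENNReal.ofReal t) := by
        rw [ENNReal.mul_rpow_of_nonneg _ _ hqinv.le, hΘ]
        congr 1
        rw [ENNReal.ofReal_rpow_of_nonneg (by positivity) hqinv.le]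
        congr 1
        rw [← Real.rpow_mul htpos.le, mul_one_div, div_self hqne, Real.rpow_one]
    _ = Θ * ((c:ℝ≥0∞) * ENNReal.ofReal t) := by ring
    _ = Θ * ENNReal.ofReal ((c:ℝ) * t) := by
        rw [← ENNReal.ofReal_coe_nnreal, ← ENNReal.ofReal_mul c.coe_nonneg]
    _ = Θ * ENNReal.ofReal (2*B*l) := by
        congr 1
        rw [ht]
        field_simp
    _ = Θ * (ENNReal.ofReal (2*B) * ENNReal.ofReal l) := by
        rw [← ENNReal.ofReal_mul (by positivity)]
    _ = (Θ * ENNReal.ofReal (2*B)) * L := by rw [hLl]; ring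
    _ ≤ ENNReal.ofReal C * L := mul_le_mul_left hCbound _


end
end

section
/- There exists a constant C>0 such that every f ∈ L^1(ℝ^n) belongs to the weak Hardy space WH^1(ℝ^n) and ‖f‖_{WH^1} ≤ C‖f‖_{L^1}; that is, L^1(ℝ^n) is continuously embedded in WH^1(ℝ^n). -/
open MeasureTheory Metric Set Filter SchwartzMap
open scoped ENNReal NNReal Topology

noncomputable section


/-- The (modified) Hardy–Littlewood maximal function. -/
def Mmax (n : ℕ) (f : Euc n → ℝ) (x : Euc n) : ℝ≥0∞ :=
  ⨆ r : {r : ℝ // 0 < r},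
    (ENNReal.ofReal ((r : ℝ) ^ n))⁻¹ * ∫⁻ z in closedBall x (r : ℝ), ‖f z‖₊ ∂volume

lemma setLIntegral_le_Mmax (n : ℕ) (f : Euc n → ℝ) (x : Euc n) {r : ℝ} (hr : 0 < r) :
    ∫⁻ z in closedBall x r, ‖f z‖₊ ∂volume ≤ ENNReal.ofReal (r ^ n) * Mmax n f x := by
  have h0 : ENNReal.ofReal (r ^ n) ≠ 0 := by
    simp [ENNReal.ofReal_eq_zero, not_le, pow_pos hr]
  have htop : ENNReal.ofReal (r ^ n) ≠ ∞ := ENNReal.ofReal_ne_top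
  have h := le_iSup (fun r : {r : ℝ // 0 < r} =>
    (ENNReal.ofReal ((r : ℝ) ^ n))⁻¹ * ∫⁻ z in closedBall x (r : ℝ), ‖f z‖₊ ∂volume) ⟨r, hr⟩
  calc ∫⁻ z in closedBall x r, ‖f z‖₊ ∂volume
      = ENNReal.ofReal (r ^ n) * ((ENNReal.ofReal (r ^ n))⁻¹ *
        ∫⁻ z in closedBall x r, ‖f z‖₊ ∂volume) := by
        rw [← mul_assoc, ENNReal.mul_inv_cancel h0 htop, one_mul]
    _ ≤ ENNReal.ofReal (r ^ n) * Mmax n f x := by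
        exact mul_le_mul_right h _

/-- Weak (1,1) bound for the maximal function. -/
lemma Mmax_weak (n : ℕ) (hn : 1 ≤ n) (f : Euc n → ℝ) (hf : Integrable f volume)
    (a : ℝ≥0) :
    (a : ℝ≥0∞) * volume {x : Euc n | (a : ℝ≥0∞) < Mmax n f x} ≤
      ENNReal.ofReal (4 ^ n) * volume (closedBall (0 : Euc n) 1) *
        ∫⁻ z, ‖f z‖₊ ∂volume := by
  rcases eq_or_ne a 0 with rfl | ha
  · simp
  set T : ℝ≥0∞ := ∫⁻ z, ‖f z‖₊ ∂volume with hT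
  have hTtop : T ≠ ∞ := hf.2.ne
  set S : Set (Euc n) := {x : Euc n | (a : ℝ≥0∞) < Mmax n f x} with hS
  have key : ∀ x ∈ S, ∃ r : ℝ, 0 < r ∧
      (a : ℝ≥0∞) * ENNReal.ofReal (r ^ n) < ∫⁻ z in closedBall x r, ‖f z‖₊ ∂volume := by
    intro x hx
    rw [hS, mem_setOf_eq, Mmax, lt_iSup_iff] at hx
    obtain ⟨⟨r, hr⟩, hlt⟩ := hx
    refine ⟨r, hr, ?_⟩
    have h0 : ENNReal.ofReal (r ^ n) ≠ 0 := by
      simp [ENNReal.ofReal_eq_zero, not_le, pow_pos hr]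
    have htop : ENNReal.ofReal (r ^ n) ≠ ∞ := ENNReal.ofReal_ne_top
    have := (ENNReal.mul_lt_mul_iff_left h0 htop).2 hlt
    calc (a : ℝ≥0∞) * ENNReal.ofReal (r ^ n) <
        ((ENNReal.ofReal (r ^ n))⁻¹ * ∫⁻ z in closedBall x r, ‖f z‖₊ ∂volume) *
          ENNReal.ofReal (r ^ n) := this
      _ = (∫⁻ z in closedBall x r, ‖f z‖₊ ∂volume) *
          ((ENNReal.ofReal (r ^ n))⁻¹ * ENNReal.ofReal (r ^ n)) := by ring
      _ = ∫⁻ z in closedBall x r, ‖f z‖₊ ∂volume := by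
          rw [ENNReal.inv_mul_cancel h0 htop, mul_one]
  classical
  set r : Euc n → ℝ := fun x => if h : x ∈ S then (key x h).choose else 0 with hrdef
  have hrpos : ∀ x ∈ S, 0 < r x := by
    intro x hx; rw [hrdef]; simp only [hx, dif_pos]; exact (key x hx).choose_spec.1
  have hrlt : ∀ x ∈ S, (a : ℝ≥0∞) * ENNReal.ofReal (r x ^ n) <
      ∫⁻ z in closedBall x (r x), ‖f z‖₊ ∂volume := by
    intro x hx; rw [hrdef]; simp only [hx, dif_pos]; exact (key x hx).choose_spec.2
  -- uniform bound on radii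
  set R : ℝ := max 1 ((T / a).toReal + 1) with hR
  have hrR : ∀ x ∈ S, r x ≤ R := by
    intro x hx
    have h1 : (a : ℝ≥0∞) * ENNReal.ofReal (r x ^ n) ≤ T :=
      ((hrlt x hx).le).trans (setLIntegral_le_lintegral _ _)
    have h2 : ENNReal.ofReal (r x ^ n) ≤ T / a := by
      rw [ENNReal.le_div_iff_mul_le (Or.inl (by exact_mod_cast ha)) (Or.inl ENNReal.coe_ne_top)]
      rw [mul_comm]; exact h1
    have hda : T / a ≠ ∞ := (ENNReal.div_lt_top hTtop (by exact_mod_cast ha)).ne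
    have h3 : r x ^ n ≤ (T / a).toReal := by
      have := ENNReal.toReal_mono hda h2
      rwa [ENNReal.toReal_ofReal (pow_nonneg (hrpos x hx).le n)] at this
    rcases le_or_gt (r x) 1 with h | h
    · exact h.trans (le_max_left _ _)
    · have : r x ≤ r x ^ n := le_self_pow₀ h.le (by omega)
      calc r x ≤ r x ^ n := this
        _ ≤ (T / a).toReal := h3
        _ ≤ (T / a).toReal + 1 := by linarith
        _ ≤ R := le_max_right _ _
  obtain ⟨u, huS, hdisj, hcov⟩ :=
    Vitali.exists_disjoint_subfamily_covering_enlargement_closedBall S (fun b => b) r R hrR 4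
      (by norm_num)
  have hucount : u.Countable := by
    apply hdisj.countable_of_nonempty_interior
    intro b hb
    rw [interior_closedBall _ (hrpos b (huS hb)).ne']
    exact ⟨b, by simpa using hrpos b (huS hb)⟩
  have hSsub : S ⊆ ⋃ b ∈ u, closedBall b (4 * r b) := by
    intro x hx
    obtain ⟨b, hbu, hsub⟩ := hcov x hx
    exact mem_biUnion hbu (hsub (mem_closedBall_self (hrpos x hx).le))
  set K : ℝ≥0∞ := volume (closedBall (0 : Euc n) 1) with hKdef
  have hK : ∀ b ∈ u, volume (closedBall b (4 * r b)) ≤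
      ENNReal.ofReal (4 ^ n) * K * ((ENNReal.ofReal (r b ^ n))) := by
    intro b hb
    have h4 : (0:ℝ) ≤ 4 * r b := by
      have := (hrpos b (huS hb)).le; linarith
    rw [Measure.addHaar_closedBall _ _ h4]
    rw [mul_pow, ENNReal.ofReal_mul (by positivity), finrank_euclideanSpace_fin]
    calc ENNReal.ofReal (4 ^ n) * ENNReal.ofReal (r b ^ n) * volume (ball (0 : Euc n) 1)
        ≤ ENNReal.ofReal (4 ^ n) * ENNReal.ofReal (r b ^ n) * K :=
          mul_le_mul_right (measure_mono ball_subset_closedBall) _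
      _ = ENNReal.ofReal (4 ^ n) * K * ENNReal.ofReal (r b ^ n) := by ring
  calc (a : ℝ≥0∞) * volume S
      ≤ (a : ℝ≥0∞) * ∑' b : u, volume (closedBall (b : Euc n) (4 * r b)) :=
        mul_le_mul_right ((measure_mono hSsub).trans
          (measure_biUnion_le volume hucount _)) _
    _ = ∑' b : u, (a : ℝ≥0∞) * volume (closedBall (b : Euc n) (4 * r b)) := by
        rw [ENNReal.tsum_mul_left]
    _ ≤ ∑' b : u, ENNReal.ofReal (4 ^ n) * K *
          ∫⁻ z in closedBall (b : Euc n) (r (b : Euc n)), ‖f z‖₊ ∂volume := by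
        refine ENNReal.tsum_le_tsum fun b => ?_
        calc (a : ℝ≥0∞) * volume (closedBall (b : Euc n) (4 * r b))
            ≤ (a : ℝ≥0∞) * (ENNReal.ofReal (4 ^ n) * K * ENNReal.ofReal (r (b:Euc n) ^ n)) :=
              mul_le_mul_right (hK b b.2) _
          _ = ENNReal.ofReal (4 ^ n) * K * ((a : ℝ≥0∞) * ENNReal.ofReal (r (b:Euc n) ^ n)) := by
              ring
          _ ≤ ENNReal.ofReal (4 ^ n) * K *
              ∫⁻ z in closedBall (b : Euc n) (r (b : Euc n)), ‖f z‖₊ ∂volume :=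
              mul_le_mul_right (hrlt b (huS b.2)).le _
    _ = ENNReal.ofReal (4 ^ n) * K *
          ∑' b : u, ∫⁻ z in closedBall (b : Euc n) (r (b : Euc n)), ‖f z‖₊ ∂volume := by
        rw [ENNReal.tsum_mul_left]
    _ ≤ ENNReal.ofReal (4 ^ n) * K * T := by
        refine mul_le_mul_right ?_ _
        rw [← lintegral_biUnion hucount (fun b _ => measurableSet_closedBall) hdisj]
        exact setLIntegral_le_lintegral _ _

lemma grand_le_Mmax (n : ℕ) (hn : 1 ≤ n) (f : Euc n → ℝ) (x : Euc n) :
    grandMaximalF n 1 f x ≤ 2 ^ (3 * n + 2) * Mmax n f x := by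
  have hN : Npar n 1 = 0 := by simp [Npar]
  rw [grandMaximalF]
  refine iSup₂_le fun φ hφ => iSup_le fun t => iSup_le fun y => ?_
  obtain ⟨t, ht⟩ := t
  obtain ⟨y, hy⟩ := y
  simp only
  -- the basic decay estimate for φ
  have hφ0 : ∀ u : Euc n, (1 + ‖u‖) ^ (n + 1) * |φ u| ≤ 1 := by
    intro u
    have := hφ u 0 (by omega) (fun i => i.elim0)
    rwa [hN, iteratedFDeriv_zero_apply, zero_add] at this
  set M : ℝ≥0∞ := Mmax n f x with hM
  set T : ℝ≥0∞ := ENNReal.ofReal (t ^ n) with hTdef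
  have hT0 : T ≠ 0 := by
    simp [hTdef, ENNReal.ofReal_eq_zero, not_le, pow_pos ht]
  have hTtop : T ≠ ∞ := ENNReal.ofReal_ne_top
  -- annuli
  set A : ℕ → Set (Euc n) := fun k =>
    Nat.rec (closedBall y t) (fun k _ => closedBall y (2 ^ (k + 1) * t) \ closedBall y (2 ^ k * t)) k
    with hA
  have hA0 : A 0 = closedBall y t := rfl
  have hAsucc : ∀ k, A (k + 1) = closedBall y (2 ^ (k + 1) * t) \ closedBall y (2 ^ k * t) :=
    fun k => rfl
  have hcover : (univ : Set (Euc n)) ⊆ ⋃ k, A k := by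
    intro z _
    rcases le_or_gt (dist z y) t with h | h
    · exact mem_iUnion.2 ⟨0, by simpa [hA0] using h⟩
    · have hex : ∃ k : ℕ, dist z y ≤ 2 ^ k * t := by
        obtain ⟨k, hk⟩ := pow_unbounded_of_one_lt (dist z y / t) (one_lt_two (α := ℝ))
        exact ⟨k, by rw [← div_le_iff₀ ht] at *; exact hk.le⟩
      classical
      have hk1 : dist z y ≤ 2 ^ (Nat.find hex) * t := Nat.find_spec hex
      have hk0 : Nat.find hex ≠ 0 := by
        intro h0
        rw [h0] at hk1
        simp only [pow_zero, one_mul] at hk1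
        exact absurd hk1 (not_le.2 h)
      obtain ⟨j, hj⟩ := Nat.exists_eq_succ_of_ne_zero hk0
      rw [hj] at hk1
      have hjm : ¬ dist z y ≤ 2 ^ j * t := Nat.find_min hex (by omega)
      exact mem_iUnion.2 ⟨j + 1, by rw [hAsucc]; exact ⟨by simpa using hk1, by simpa using hjm⟩⟩
  have hAmeas : ∀ k, MeasurableSet (A k) := by
    intro k
    cases k with
    | zero => exact measurableSet_closedBall
    | succ j => rw [hAsucc]; exact measurableSet_closedBall.diff measurableSet_closedBall
  -- inclusion in balls around x
  have hAsub : ∀ k, A k ⊆ closedBall x (2 ^ (k + 2) * t) := by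
    intro k z hz
    have hzy : dist z y ≤ 2 ^ (k + 1) * t := by
      cases k with
      | zero =>
          have h1 : dist z y ≤ t := by simpa [hA0] using hz
          simp only [pow_succ, pow_zero, one_mul]
          linarith
      | succ j =>
          rw [hAsucc] at hz
          have h1 : dist z y ≤ 2 ^ (j + 1) * t := by simpa using hz.1
          have hp : (2:ℝ) ^ (j + 1) ≤ 2 ^ (j + 1 + 1) :=
            pow_le_pow_right₀ one_le_two (by omega)
          nlinarith
    have h2 : (0:ℝ) < 2 ^ (k + 1) * t := by positivity
    calc dist z x ≤ dist z y + dist y x := dist_triangle z y x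
      _ ≤ 2 ^ (k + 1) * t + t := add_le_add hzy hy.le
      _ ≤ 2 ^ (k + 2) * t := by
          have h0 : (1:ℝ) ≤ 2 ^ (k + 1) := one_le_pow₀ one_le_two
          have h1 : (2:ℝ) ^ (k + 2) * t = 2 * (2 ^ (k + 1) * t) := by ring
          have h2 := mul_le_mul_of_nonneg_right h0 ht.le
          rw [one_mul] at h2
          linarith
  -- the φ decay on A k
  have hφA : ∀ k, ∀ z ∈ A k,
      (2 : ℝ≥0∞) ^ (k * (n + 1)) * (‖φ (t⁻¹ • (y - z))‖₊ : ℝ≥0∞) ≤ 2 ^ (n + 1) := by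
    intro k z hz
    set u := t⁻¹ • (y - z) with hu
    have hun : ‖u‖ = dist z y / t := by
      rw [hu, norm_smul, norm_inv, Real.norm_eq_abs, abs_of_pos ht, dist_comm, dist_eq_norm]
      ring
    have hk2 : (2:ℝ) ^ k ≤ 2 * (1 + ‖u‖) := by
      have hu0 : 0 ≤ ‖u‖ := norm_nonneg u
      cases k with
      | zero => simp; linarith
      | succ j =>
          rw [hAsucc] at hz
          have : ¬ dist z y ≤ 2 ^ j * t := by simpa using hz.2
          push_neg at this
          have : (2:ℝ) ^ j ≤ ‖u‖ := by
            rw [hun, le_div_iff₀ ht]; linarith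
          rw [pow_succ]
          nlinarith
    -- real inequality
    have hreal : 2 ^ (k * (n + 1)) * |φ u| ≤ 2 ^ (n + 1) := by
      have h1 : ((2:ℝ) ^ k) ^ (n + 1) ≤ (2 * (1 + ‖u‖)) ^ (n + 1) :=
        pow_le_pow_left₀ (by positivity) hk2 _
      have h2 : (2 * (1 + ‖u‖)) ^ (n + 1) = 2 ^ (n + 1) * (1 + ‖u‖) ^ (n + 1) := by
        rw [mul_pow]
      have h3 := hφ0 u
      have habs : 0 ≤ |φ u| := abs_nonneg _
      calc (2:ℝ) ^ (k * (n + 1)) * |φ u| = ((2:ℝ) ^ k) ^ (n + 1) * |φ u| := by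
            rw [← pow_mul]
        _ ≤ 2 ^ (n + 1) * ((1 + ‖u‖) ^ (n + 1) * |φ u|) := by nlinarith
        _ ≤ 2 ^ (n + 1) * 1 := by nlinarith [pow_pos (by norm_num : (0:ℝ) < 2) (n+1)]
        _ = 2 ^ (n + 1) := by ring
    -- transfer to ℝ≥0∞
    have := ENNReal.ofReal_le_ofReal hreal
    rw [ENNReal.ofReal_mul (by positivity), ENNReal.ofReal_pow (by norm_num),
      ENNReal.ofReal_pow (by norm_num), ENNReal.ofReal_ofNat] at this
    rw [← Real.enorm_eq_ofReal_abs, enorm_eq_nnnorm] at this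
    exact_mod_cast this
  -- transfer to the lintegral world and sum over annuli
  have hTinv : (‖((t:ℝ) ^ n)⁻¹‖₊ : ℝ≥0∞) = T⁻¹ := by
    rw [← enorm_eq_nnnorm, Real.enorm_eq_ofReal_abs, abs_inv, abs_of_pos (pow_pos ht n), hTdef,
      ENNReal.ofReal_inv_of_pos (pow_pos ht n)]
  have hTinv_ne_top : T⁻¹ ≠ ∞ := by simpa using ENNReal.inv_ne_top.2 hT0
  have hsplit : (∫⁻ z, (‖φ (t⁻¹ • (y - z))‖₊ : ℝ≥0∞) * ‖f z‖₊ ∂volume) ≤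
      ∑' k, ∫⁻ z in A k, (‖φ (t⁻¹ • (y - z))‖₊ : ℝ≥0∞) * ‖f z‖₊ ∂volume := by
    calc (∫⁻ z, (‖φ (t⁻¹ • (y - z))‖₊ : ℝ≥0∞) * ‖f z‖₊ ∂volume)
        = ∫⁻ z in univ, (‖φ (t⁻¹ • (y - z))‖₊ : ℝ≥0∞) * ‖f z‖₊ ∂volume :=
          (setLIntegral_univ _).symm
      _ ≤ ∫⁻ z in ⋃ k, A k, (‖φ (t⁻¹ • (y - z))‖₊ : ℝ≥0∞) * ‖f z‖₊ ∂volume :=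
          lintegral_mono_set hcover
      _ ≤ ∑' k, ∫⁻ z in A k, (‖φ (t⁻¹ • (y - z))‖₊ : ℝ≥0∞) * ‖f z‖₊ ∂volume :=
          lintegral_iUnion_le _ _
  have hperk : ∀ k : ℕ, (∫⁻ z in A k, (‖φ (t⁻¹ • (y - z))‖₊ : ℝ≥0∞) * ‖f z‖₊ ∂volume) ≤
      2 ^ (3 * n + 1) * ((2 : ℝ≥0∞) ^ k)⁻¹ * (T * M) := by
    intro k
    have hc0 : ((2 : ℝ≥0∞) ^ (k * (n + 1))) ≠ 0 := pow_ne_zero _ two_ne_zero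
    have hctop : ((2 : ℝ≥0∞) ^ (k * (n + 1))) ≠ ∞ := ENNReal.pow_ne_top ENNReal.ofNat_ne_top
    rw [← ENNReal.mul_le_mul_iff_right hc0 hctop]
    have hpow : ENNReal.ofReal ((2 ^ (k + 2) * t) ^ n) = 2 ^ ((k + 2) * n) * T := by
      rw [mul_pow, ← pow_mul, hTdef, ENNReal.ofReal_mul (by positivity),
        ENNReal.ofReal_pow (by norm_num), ENNReal.ofReal_ofNat]
    have h2k : (2 : ℝ≥0∞) ^ k * ((2 : ℝ≥0∞) ^ k)⁻¹ = 1 :=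
      ENNReal.mul_inv_cancel (pow_ne_zero _ two_ne_zero) (ENNReal.pow_ne_top ENNReal.ofNat_ne_top)
    have hconst : (2 : ℝ≥0∞) ^ (n + 1) * 2 ^ ((k + 2) * n) =
        2 ^ (k * (n + 1)) * (2 ^ (3 * n + 1) * ((2 : ℝ≥0∞) ^ k)⁻¹) := by
      calc (2 : ℝ≥0∞) ^ (n + 1) * 2 ^ ((k + 2) * n) = 2 ^ (n + 1 + (k + 2) * n) := by
            rw [← pow_add]
        _ = 2 ^ (n + 1 + (k + 2) * n) * (2 ^ k * ((2 : ℝ≥0∞) ^ k)⁻¹) := by rw [h2k, mul_one]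
        _ = 2 ^ (n + 1 + (k + 2) * n) * 2 ^ k * ((2 : ℝ≥0∞) ^ k)⁻¹ := by ring
        _ = 2 ^ (k * (n + 1)) * 2 ^ (3 * n + 1) * ((2 : ℝ≥0∞) ^ k)⁻¹ := by
            rw [← pow_add, ← pow_add]; congr 1; ring
        _ = 2 ^ (k * (n + 1)) * (2 ^ (3 * n + 1) * ((2 : ℝ≥0∞) ^ k)⁻¹) := by ring
    calc (2 : ℝ≥0∞) ^ (k * (n + 1)) *
          ∫⁻ z in A k, (‖φ (t⁻¹ • (y - z))‖₊ : ℝ≥0∞) * ‖f z‖₊ ∂volume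
        = ∫⁻ z in A k, (2 : ℝ≥0∞) ^ (k * (n + 1)) *
            ((‖φ (t⁻¹ • (y - z))‖₊ : ℝ≥0∞) * ‖f z‖₊) ∂volume :=
          (lintegral_const_mul' _ _ hctop).symm
      _ ≤ ∫⁻ z in A k, (2 : ℝ≥0∞) ^ (n + 1) * ‖f z‖₊ ∂volume := by
          refine setLIntegral_mono' (hAmeas k) fun z hz => ?_
          calc (2 : ℝ≥0∞) ^ (k * (n + 1)) * ((‖φ (t⁻¹ • (y - z))‖₊ : ℝ≥0∞) * ‖f z‖₊)
              = ((2 : ℝ≥0∞) ^ (k * (n + 1)) * ‖φ (t⁻¹ • (y - z))‖₊) * ‖f z‖₊ := by ring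
            _ ≤ (2 : ℝ≥0∞) ^ (n + 1) * ‖f z‖₊ := mul_le_mul_left (hφA k z hz) _
      _ = (2 : ℝ≥0∞) ^ (n + 1) * ∫⁻ z in A k, ‖f z‖₊ ∂volume :=
          lintegral_const_mul' _ _ (ENNReal.pow_ne_top ENNReal.ofNat_ne_top)
      _ ≤ (2 : ℝ≥0∞) ^ (n + 1) * ∫⁻ z in closedBall x (2 ^ (k + 2) * t), ‖f z‖₊ ∂volume :=
          mul_le_mul_right (lintegral_mono_set (hAsub k)) _
      _ ≤ (2 : ℝ≥0∞) ^ (n + 1) * (ENNReal.ofReal ((2 ^ (k + 2) * t) ^ n) * M) :=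
          mul_le_mul_right (setLIntegral_le_Mmax n f x (by positivity)) _
      _ = (2 : ℝ≥0∞) ^ (n + 1) * 2 ^ ((k + 2) * n) * (T * M) := by rw [hpow]; ring
      _ = 2 ^ (k * (n + 1)) * (2 ^ (3 * n + 1) * ((2 : ℝ≥0∞) ^ k)⁻¹ * (T * M)) := by
          rw [hconst]; ring
  have htsum : ∑' k : ℕ, (2 : ℝ≥0∞) ^ (3 * n + 1) * ((2 : ℝ≥0∞) ^ k)⁻¹ * (T * M) =
      2 ^ (3 * n + 2) * T * M := by
    have h1 : ∀ k : ℕ, (2 : ℝ≥0∞) ^ (3 * n + 1) * ((2 : ℝ≥0∞) ^ k)⁻¹ * (T * M) =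
        (2 ^ (3 * n + 1) * (T * M)) * (2⁻¹ : ℝ≥0∞) ^ k := by
      intro k; rw [← ENNReal.inv_pow]; ring
    simp_rw [h1]
    rw [ENNReal.tsum_mul_left, ENNReal.tsum_geometric, ENNReal.one_sub_inv_two, inv_inv]
    have h2 : (2 : ℝ≥0∞) ^ (3 * n + 2) = 2 ^ (3 * n + 1) * 2 := by
      rw [← pow_succ]
    rw [h2]; ring
  calc ENNReal.ofReal |∫ z, ((t : ℝ) ^ n)⁻¹ * φ ((t : ℝ)⁻¹ • (y - z)) * f z|
      = (‖∫ z, ((t : ℝ) ^ n)⁻¹ * φ ((t : ℝ)⁻¹ • (y - z)) * f z‖₊ : ℝ≥0∞) :=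
        (Real.enorm_eq_ofReal_abs _).symm
    _ ≤ ∫⁻ z, (‖((t : ℝ) ^ n)⁻¹ * φ ((t : ℝ)⁻¹ • (y - z)) * f z‖₊ : ℝ≥0∞) ∂volume :=
        enorm_integral_le_lintegral_enorm _
    _ = T⁻¹ * ∫⁻ z, (‖φ (t⁻¹ • (y - z))‖₊ : ℝ≥0∞) * ‖f z‖₊ ∂volume := by
        rw [← lintegral_const_mul' _ _ hTinv_ne_top]
        congr 1; funext z
        rw [nnnorm_mul, nnnorm_mul, ENNReal.coe_mul, ENNReal.coe_mul, hTinv, mul_assoc]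
    _ ≤ T⁻¹ * ∑' k, ∫⁻ z in A k, (‖φ (t⁻¹ • (y - z))‖₊ : ℝ≥0∞) * ‖f z‖₊ ∂volume :=
        mul_le_mul_right hsplit _
    _ ≤ T⁻¹ * ∑' k : ℕ, (2 : ℝ≥0∞) ^ (3 * n + 1) * ((2 : ℝ≥0∞) ^ k)⁻¹ * (T * M) :=
        mul_le_mul_right (ENNReal.tsum_le_tsum hperk) _
    _ = T⁻¹ * T * (2 ^ (3 * n + 2) * M) := by rw [htsum]; ring
    _ = 2 ^ (3 * n + 2) * M := by rw [ENNReal.inv_mul_cancel hT0 hTtop, one_mul]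

/-- **`L^1(ℝ^n)` embeds continuously in `WH^1(ℝ^n)`:** every `f ∈ L^1` lies in the weak
Hardy space `WH^1` and `‖f‖_{WH^1} ≤ C ‖f‖_{L^1}`. -/
theorem L1_embeds_weak_hardy
    (n : ℕ) (hn : 1 ≤ n) :
    ∃ C : ℝ, 0 < C ∧ ∀ f : Euc n → ℝ, Integrable f volume →
      whnormF n 1 f ≤ ENNReal.ofReal C * eLpNorm f 1 volume := by
  set K : ℝ≥0∞ := volume (closedBall (0 : Euc n) 1) with hKdef
  have hKtop : K ≠ ∞ := measure_closedBall_lt_top.ne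
  refine ⟨K.toReal * 4 ^ n * 2 ^ (3 * n + 2) + 1, by positivity, ?_⟩
  intro f hf
  have hCbig : (2 : ℝ≥0∞) ^ (3 * n + 2) * (ENNReal.ofReal (4 ^ n) * K) ≤
      ENNReal.ofReal (K.toReal * 4 ^ n * 2 ^ (3 * n + 2) + 1) := by
    have h2 : ((2 : ℝ≥0∞)) ^ (3 * n + 2) = ENNReal.ofReal (2 ^ (3 * n + 2)) := by
      rw [ENNReal.ofReal_pow (by norm_num), ENNReal.ofReal_ofNat]
    have hK : K = ENNReal.ofReal K.toReal := (ENNReal.ofReal_toReal hKtop).symm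
    rw [h2]
    nth_rewrite 1 [hK]
    rw [← ENNReal.ofReal_mul (by positivity), ← ENNReal.ofReal_mul (by positivity)]
    apply ENNReal.ofReal_le_ofReal
    have : (0:ℝ) ≤ K.toReal := ENNReal.toReal_nonneg
    nlinarith [pow_pos (by norm_num : (0:ℝ) < 2) (3*n+2), pow_pos (by norm_num : (0:ℝ) < 4) n]
  rw [whnormF, wnormE]
  refine iSup_le fun a => ?_
  rcases eq_or_ne a 0 with rfl | ha
  · simp
  set b : ℝ≥0 := a / 2 ^ (3 * n + 2) with hbdef
  have hbcoe : (b : ℝ≥0∞) * 2 ^ (3 * n + 2) = (a : ℝ≥0∞) := by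
    have hb : b * 2 ^ (3 * n + 2) = a :=
      div_mul_cancel₀ a (by positivity : (2:ℝ≥0) ^ (3 * n + 2) ≠ 0)
    calc (b : ℝ≥0∞) * 2 ^ (3 * n + 2) = ((b * 2 ^ (3 * n + 2) : ℝ≥0) : ℝ≥0∞) := by
          push_cast; ring
      _ = (a : ℝ≥0∞) := by rw [hb]
  have hsub : {x : Euc n | (a : ℝ≥0∞) < grandMaximalF n 1 f x} ⊆
      {x : Euc n | (b : ℝ≥0∞) < Mmax n f x} := by
    intro x hx
    rw [mem_setOf_eq] at hx ⊢
    by_contra hle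
    push_neg at hle
    have h1 : grandMaximalF n 1 f x ≤ 2 ^ (3 * n + 2) * Mmax n f x := grand_le_Mmax n hn f x
    have h2 : (2 : ℝ≥0∞) ^ (3 * n + 2) * Mmax n f x ≤ 2 ^ (3 * n + 2) * b :=
      mul_le_mul_right hle _
    have h3 : (2 : ℝ≥0∞) ^ (3 * n + 2) * b = a := by rw [mul_comm]; exact hbcoe
    exact lt_irrefl _ (lt_of_lt_of_le hx (h1.trans (h2.trans_eq h3)))
  have hweak := Mmax_weak n hn f hf b
  calc (a : ℝ≥0∞) * volume {x : Euc n | (a : ℝ≥0∞) < grandMaximalF n 1 f x} ^ ((1:ℝ) / 1)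
      = (a : ℝ≥0∞) * volume {x : Euc n | (a : ℝ≥0∞) < grandMaximalF n 1 f x} := by
        norm_num
    _ ≤ (a : ℝ≥0∞) * volume {x : Euc n | (b : ℝ≥0∞) < Mmax n f x} :=
        mul_le_mul_right (measure_mono hsub) _
    _ = 2 ^ (3 * n + 2) * ((b : ℝ≥0∞) * volume {x : Euc n | (b : ℝ≥0∞) < Mmax n f x}) := by
        rw [← hbcoe]; ring
    _ ≤ 2 ^ (3 * n + 2) * (ENNReal.ofReal (4 ^ n) * K * ∫⁻ z, ‖f z‖₊ ∂volume) :=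
        mul_le_mul_right hweak _
    _ = 2 ^ (3 * n + 2) * (ENNReal.ofReal (4 ^ n) * K) * ∫⁻ z, ‖f z‖₊ ∂volume := by ring
    _ ≤ ENNReal.ofReal (K.toReal * 4 ^ n * 2 ^ (3 * n + 2) + 1) * ∫⁻ z, ‖f z‖₊ ∂volume :=
        mul_le_mul_left hCbig _
    _ = ENNReal.ofReal (K.toReal * 4 ^ n * 2 ^ (3 * n + 2) + 1) * eLpNorm f 1 volume := by
        rw [eLpNorm_one_eq_lintegral_enorm]; rfl

end
end
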